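/- Let δ, γ ∈ (−1, +∞) and let h : [0,∞) → ℝ be continuous with 0 ≤ h(x) ≤ 1 for all x ≥ 0. Then y := T(h) is a solution of the auxiliary linear problem: ((1 + δ h(x)) y'(x))' + 2x(1 + γ h(x)) y'(x) = 0 for all x ∈ (0,∞), y(0) = 0, and lim_{x→+∞} y(x) = 1. -/

import Mathlib

open Real Filter Set

/-- `F(x; h)` from the paper. -/
noncomputable def Fint (δ γ : ℝ) (h : ℝ → ℝ) (x : ℝ) : ℝ :=
  ∫ w in (0:ℝ)..x,
    Real.exp (-(∫ z in (0:ℝ)..w, 2*z*(1+γ*h z)/(1+δ*h z))) * (1/(1+δ*h w))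

theorem T_solves_auxiliary_problem (δ γ : ℝ) (hδ : -1 < δ) (hγ : -1 < γ)
    (h : ℝ → ℝ) (hcont : ContinuousOn h (Set.Ici 0))
    (hb : ∀ x ≥ (0:ℝ), 0 ≤ h x ∧ h x ≤ 1)
    (L : ℝ) (hL : Tendsto (Fint δ γ h) atTop (nhds L)) :
    (∀ x ∈ Set.Ioi (0:ℝ), DifferentiableAt ℝ (fun t => Fint δ γ h t / L) x) ∧
    (∀ x ∈ Set.Ioi (0:ℝ),
      HasDerivAt (fun t => (1 + δ * h t) * deriv (fun s => Fint δ γ h s / L) t)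
        (-(2 * x * (1 + γ * h x) * deriv (fun s => Fint δ γ h s / L) x)) x) ∧
    (fun x => Fint δ γ h x / L) 0 = 0 ∧
    Tendsto (fun x => Fint δ γ h x / L) atTop (nhds 1) := by
  -- globalize h
  set h' : ℝ → ℝ := fun x => h (max x 0) with hh'
  have hcont' : Continuous h' :=
    hcont.comp_continuous (continuous_id.max continuous_const)
      (fun x => by simp [Set.mem_Ici])
  have hb' : ∀ x, 0 ≤ h' x ∧ h' x ≤ 1 := fun x => hb _ (le_max_right _ _)
  have hpos : ∀ x, 0 < 1 + δ * h' x := by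
    intro x
    obtain ⟨h0, h1⟩ := hb' x
    rcases le_or_gt 0 δ with hd | hd
    · nlinarith [mul_nonneg hd h0]
    · nlinarith [mul_nonneg (by linarith : (0:ℝ) ≤ -δ) (sub_nonneg.2 h1)]
  have hEq : ∀ x ≥ (0:ℝ), h' x = h x := fun x hx => by
    simp only [hh']
    rw [max_eq_left hx]
  -- inner integrand and primitive
  set q : ℝ → ℝ := fun z => 2*z*(1+γ*h' z)/(1+δ*h' z) with hq
  have hqcont : Continuous q :=
    ((continuous_const.mul continuous_id).mul
      (continuous_const.add (continuous_const.mul hcont'))).div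
      (continuous_const.add (continuous_const.mul hcont')) (fun z => (hpos z).ne')
  set I : ℝ → ℝ := fun w => ∫ z in (0:ℝ)..w, q z with hIdef
  have hIderiv : ∀ w, HasDerivAt I (q w) w := fun w =>
    (hqcont.integral_hasStrictDerivAt 0 w).hasDerivAt
  have hIcont : Continuous I := by
    have : Differentiable ℝ I := fun w => (hIderiv w).differentiableAt
    exact this.continuous
  -- outer integrand and primitive
  set g : ℝ → ℝ := fun w => Real.exp (-(I w)) * (1/(1+δ*h' w)) with hg
  have hgcont : Continuous g :=
    (Real.continuous_exp.comp hIcont.neg).mul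
      (continuous_const.div (continuous_const.add (continuous_const.mul hcont'))
        (fun w => (hpos w).ne'))
  have hgpos : ∀ w, 0 < g w := fun w =>
    mul_pos (Real.exp_pos _) (one_div_pos.mpr (hpos w))
  set G : ℝ → ℝ := fun x => ∫ w in (0:ℝ)..x, g w with hGdef
  have hGderiv : ∀ x, HasDerivAt G (g x) x := fun x =>
    (hgcont.integral_hasStrictDerivAt 0 x).hasDerivAt
  -- Fint agrees with G on [0, ∞)
  have hFG : ∀ x ≥ (0:ℝ), Fint δ γ h x = G x := by
    intro x hx
    unfold Fint
    apply intervalIntegral.integral_congr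
    intro w hw
    rw [Set.uIcc_of_le hx] at hw
    have hw0 : 0 ≤ w := hw.1
    have hinner : (∫ z in (0:ℝ)..w, 2*z*(1+γ*h z)/(1+δ*h z)) = I w := by
      apply intervalIntegral.integral_congr
      intro z hz
      rw [Set.uIcc_of_le hw0] at hz
      simp only [hq]
      rw [hEq z hz.1]
    simp only [hg]
    rw [hinner, hEq w hw0]
  -- eventual equality near positive points
  have hev : ∀ x ∈ Set.Ioi (0:ℝ),
      (fun t => Fint δ γ h t / L) =ᶠ[nhds x] (fun t => G t / L) := by
    intro x hx
    filter_upwards [Ioi_mem_nhds hx] with t ht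
    rw [hFG t (le_of_lt ht)]
  have hDeriv : ∀ x ∈ Set.Ioi (0:ℝ),
      HasDerivAt (fun t => Fint δ γ h t / L) (g x / L) x := by
    intro x hx
    exact ((hGderiv x).div_const L).congr_of_eventuallyEq (hev x hx)
  have hderivEq : ∀ x ∈ Set.Ioi (0:ℝ),
      deriv (fun s => Fint δ γ h s / L) x = g x / L := fun x hx =>
    (hDeriv x hx).deriv
  -- positivity of L
  have hGL : Tendsto G atTop (nhds L) := by
    apply hL.congr'
    filter_upwards [eventually_ge_atTop (0:ℝ)] with x hx
    exact hFG x hx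
  have hG1 : (0:ℝ) < G 1 :=
    intervalIntegral.intervalIntegral_pos_of_pos
      (hgcont.intervalIntegrable 0 1) hgpos one_pos
  have hLpos : 0 < L := by
    refine lt_of_lt_of_le hG1 (ge_of_tendsto hGL ?_)
    filter_upwards [eventually_ge_atTop (1:ℝ)] with x hx
    have hsplit : G 1 + ∫ w in (1:ℝ)..x, g w = G x :=
      intervalIntegral.integral_add_adjacent_intervals
        (hgcont.intervalIntegrable 0 1) (hgcont.intervalIntegrable 1 x)
    have hnn : 0 ≤ ∫ w in (1:ℝ)..x, g w :=
      intervalIntegral.integral_nonneg hx (fun u _ => (hgpos u).le)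
    linarith
  refine ⟨fun x hx => (hDeriv x hx).differentiableAt, ?_, ?_, ?_⟩
  · -- the ODE
    intro x hx
    have hx0 : (0:ℝ) < x := hx
    have hE : HasDerivAt (fun t => Real.exp (-(I t)) / L)
        (Real.exp (-(I x)) * (-(q x)) / L) x := by
      have h1 : HasDerivAt (fun t => -(I t)) (-(q x)) x := (hIderiv x).neg
      exact h1.exp.div_const L
    have hval : Real.exp (-(I x)) * (-(q x)) / L
        = -(2 * x * (1 + γ * h x) * deriv (fun s => Fint δ γ h s / L) x) := by
      rw [hderivEq x hx, hg, hq, ← hEq x hx0.le]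
      field_simp
    rw [← hval]
    apply hE.congr_of_eventuallyEq
    filter_upwards [Ioi_mem_nhds hx] with t ht
    rw [hderivEq t ht, ← hEq t (le_of_lt ht), hg]
    field_simp [(hpos t).ne', hLpos.ne']
  · simp [Fint]
  · have := hL.div_const L
    rwa [div_self hLpos.ne'] at this
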